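/- Let A, C, D be symmetric positive-definite n×n real matrices and B an m×n real matrix of full row rank. Suppose the image of Bᵀ is an invariant subspace on which the relevant operators are well-behaved; define the BFBT approximation S̃⁻¹ := (B C⁻¹ Bᵀ)⁻¹ (B C⁻¹ A D⁻¹ Bᵀ) (B D⁻¹ Bᵀ)⁻¹. If the commutator A D⁻¹ Bᵀ − Bᵀ X = 0 holds exactly for X := (B C⁻¹ Bᵀ)⁻¹ (B C⁻¹ A D⁻¹ Bᵀ) and X is invertible, then S̃⁻¹ = (B A⁻¹ Bᵀ)⁻¹, i.e., BFBT equals the exact inverse Schur complement. -/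

import Mathlib

open Matrix

lemma mulVec_transpose_injective {n m : ℕ} (B : Matrix (Fin m) (Fin n) ℝ)
    (hB : B.rank = m) : Function.Injective (Bᵀ.mulVec) := by
  have hrank : Bᵀ.rank = m := by rw [Matrix.rank_transpose]; exact hB
  have h := LinearMap.finrank_range_add_finrank_ker (Bᵀ.mulVecLin)
  unfold Matrix.rank at hrank
  rw [hrank] at h
  have hdom : Module.finrank ℝ (Fin m → ℝ) = m := by simp
  rw [hdom] at h
  have hker : Module.finrank ℝ (LinearMap.ker Bᵀ.mulVecLin) = 0 := by omega
  have : LinearMap.ker Bᵀ.mulVecLin = ⊥ := Submodule.finrank_eq_zero.mp hker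
  have hinj : Function.Injective Bᵀ.mulVecLin := LinearMap.ker_eq_bot.mp this
  exact hinj

lemma posDef_sandwich {n m : ℕ} {M : Matrix (Fin n) (Fin n) ℝ} (hM : M.PosDef)
    (B : Matrix (Fin m) (Fin n) ℝ) (hB : B.rank = m) : (B * M * Bᵀ).PosDef := by
  have hinj := mulVec_transpose_injective B hB
  refine Matrix.PosDef.of_dotProduct_mulVec_pos ?_ (fun x hx => ?_)
  · have := hM.posSemidef.mul_mul_conjTranspose_same B
    simpa using this.isHermitian
  · have hBx : Bᵀ *ᵥ x ≠ 0 := by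
      intro h
      exact hx (hinj (by simpa using h))
    have := hM.dotProduct_mulVec_pos hBx
    have key : star x ⬝ᵥ ((B * M * Bᵀ) *ᵥ x) = star (Bᵀ *ᵥ x) ⬝ᵥ (M *ᵥ (Bᵀ *ᵥ x)) := by
      simp only [star_trivial, ← mulVec_mulVec]
      rw [dotProduct_mulVec x, ← vecMul_transpose]
      rw [← mulVec_transpose]
    rw [key]
    exact this

theorem stmt5 {n m : ℕ} (A C D : Matrix (Fin n) (Fin n) ℝ)
    (hA : A.PosDef) (hC : C.PosDef) (hD : D.PosDef)
    (B : Matrix (Fin m) (Fin n) ℝ) (hB : B.rank = m)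
    (X : Matrix (Fin m) (Fin m) ℝ)
    (hX : X = (B * C⁻¹ * Bᵀ)⁻¹ * (B * C⁻¹ * A * D⁻¹ * Bᵀ))
    (hXinv : IsUnit X.det)
    (hcomm : A * D⁻¹ * Bᵀ = Bᵀ * X) :
    (B * C⁻¹ * Bᵀ)⁻¹ * (B * C⁻¹ * A * D⁻¹ * Bᵀ) * (B * D⁻¹ * Bᵀ)⁻¹
      = (B * A⁻¹ * Bᵀ)⁻¹ := by
  have hSd : (B * D⁻¹ * Bᵀ).PosDef := posDef_sandwich hD.inv B hB
  have hSA : (B * A⁻¹ * Bᵀ).PosDef := posDef_sandwich hA.inv B hB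
  have hAdet : IsUnit A.det := hA.det_pos.ne'.isUnit
  have hAinv : A⁻¹ * A = 1 := Matrix.nonsing_inv_mul A hAdet
  have hkey : (B * A⁻¹ * Bᵀ) * X = B * D⁻¹ * Bᵀ := by
    calc (B * A⁻¹ * Bᵀ) * X = B * A⁻¹ * (Bᵀ * X) := by rw [Matrix.mul_assoc]
    _ = B * A⁻¹ * (A * D⁻¹ * Bᵀ) := by rw [hcomm]
    _ = B * D⁻¹ * Bᵀ := by
        simp only [← Matrix.mul_assoc]
        rw [Matrix.mul_assoc B A⁻¹ A, hAinv, Matrix.mul_one]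
  have hSdDet : IsUnit (B * D⁻¹ * Bᵀ).det := hSd.det_pos.ne'.isUnit
  have hSA' : (B * A⁻¹ * Bᵀ) = (B * D⁻¹ * Bᵀ) * X⁻¹ := by
    rw [← hkey, Matrix.mul_assoc (B * A⁻¹ * Bᵀ) X X⁻¹, Matrix.mul_nonsing_inv X hXinv,
      Matrix.mul_one]
  have : (B * C⁻¹ * Bᵀ)⁻¹ * (B * C⁻¹ * A * D⁻¹ * Bᵀ) = X := hX.symm
  rw [show (B * C⁻¹ * Bᵀ)⁻¹ * (B * C⁻¹ * A * D⁻¹ * Bᵀ) * (B * D⁻¹ * Bᵀ)⁻¹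
      = X * (B * D⁻¹ * Bᵀ)⁻¹ by rw [← this],
    hSA', Matrix.mul_inv_rev, Matrix.nonsing_inv_nonsing_inv X hXinv]
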